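/- Let n ≥ 2 be a natural number, let a be a natural number with 0 ≤ a ≤ F_{n-1}, and b a natural number with 0 ≤ b ≤ F_n, not both a = F_{n-1} and b = F_n. Then the polynomial p(x) = x^n − (F_n − b)·x − (F_{n-1} − a) has exactly one positive real root. -/
import Mathlib


theorem unique_positive_root (n a b : ℕ) (hn : 2 ≤ n)
    (ha : a ≤ Nat.fib (n - 1)) (hb : b ≤ Nat.fib n)
    (hab : ¬(a = Nat.fib (n - 1) ∧ b = Nat.fib n)) :
    ∃! x : ℝ, 0 < x ∧
      x ^ n - ((Nat.fib n : ℝ) - b) * x - ((Nat.fib (n - 1) : ℝ) - a) = 0 := by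
  set A : ℝ := (Nat.fib (n - 1) : ℝ) - a with hAdef
  set B : ℝ := (Nat.fib n : ℝ) - b with hBdef
  have hA : 0 ≤ A := sub_nonneg.2 (by exact_mod_cast ha)
  have hB : 0 ≤ B := sub_nonneg.2 (by exact_mod_cast hb)
  have hn0 : n ≠ 0 := by omega
  have hAB : 0 < A ∨ 0 < B := by
    by_contra h
    push_neg at h
    have hA0 : A = 0 := le_antisymm h.1 hA
    have hB0 : B = 0 := le_antisymm h.2 hB
    apply hab
    constructor
    · have : (a : ℝ) = (Nat.fib (n - 1) : ℝ) := by
        rw [hAdef] at hA0; linarith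
      exact_mod_cast this
    · have : (b : ℝ) = (Nat.fib n : ℝ) := by
        rw [hBdef] at hB0; linarith
      exact_mod_cast this
  -- uniqueness
  have key : ∀ x y : ℝ, 0 < x → x < y → x ^ n = B * x + A → y ^ n = B * y + A → False := by
    intro x y hx hxy hxe hye
    have hy : 0 < y := hx.trans hxy
    have h1 : x * y ^ n ≤ y * x ^ n := by
      have h0 : 0 ≤ A * (y - x) := mul_nonneg hA (sub_nonneg.2 hxy.le)
      nlinarith
    obtain ⟨m, rfl⟩ : ∃ m, n = m + 1 := ⟨n - 1, by omega⟩
    have hm : m ≠ 0 := by omega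
    have h2 : y ^ m ≤ x ^ m := by
      have h3 : (x * y) * y ^ m ≤ (x * y) * x ^ m := by
        calc (x * y) * y ^ m = x * y ^ (m + 1) := by ring
        _ ≤ y * x ^ (m + 1) := h1
        _ = (x * y) * x ^ m := by ring
      exact le_of_mul_le_mul_left h3 (mul_pos hx hy)
    have : x ^ m < y ^ m := pow_lt_pow_left₀ hxy hx.le hm
    linarith
  have uniq : ∀ x y : ℝ, 0 < x → 0 < y → x ^ n = B * x + A → y ^ n = B * y + A → x = y := by
    intro x y hx hy hxe hye
    rcases lt_trichotomy x y with h | h | h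
    · exact (key x y hx h hxe hye).elim
    · exact h
    · exact ((key y x hy h hye hxe)).elim
  -- existence
  set M : ℝ := B + A + 1 with hMdef
  have hM1 : 1 ≤ M := by linarith
  have hM2 : M ^ 2 ≤ M ^ n := pow_le_pow_right₀ hM1 hn
  have hfM : B * M + A < M ^ n := by nlinarith
  have hcont : Continuous fun x : ℝ => x ^ n - B * x - A := ((continuous_pow n).sub (continuous_const.mul continuous_id)).sub continuous_const
  have hex : ∃ x : ℝ, 0 < x ∧ x ^ n = B * x + A := by
    rcases hAB with hA' | hB'
    · -- A > 0, use ε = 0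
      have hf0 : (0 : ℝ) ^ n - B * 0 - A < 0 := by
        rw [zero_pow hn0]; linarith
      have h0M : (0 : ℝ) ≤ M := by linarith
      have := intermediate_value_Icc h0M hcont.continuousOn
      have hmem : (0 : ℝ) ∈ Set.Icc ((0:ℝ) ^ n - B * 0 - A) (M ^ n - B * M - A) :=
        ⟨hf0.le, by linarith⟩
      obtain ⟨c, hc, hfc⟩ := this hmem
      have hfc' : c ^ n - B * c - A = 0 := hfc
      refine ⟨c, ?_, by linarith⟩
      rcases eq_or_lt_of_le hc.1 with h | h
      · exfalso; rw [← h] at hfc'; rw [zero_pow hn0] at hfc'; linarith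
      · exact h
    · -- B > 0, use ε = min 1 B / 2
      set ε : ℝ := min 1 B / 2 with hεdef
      have hε : 0 < ε := by
        have : 0 < min 1 B := lt_min one_pos hB'
        positivity
      have hε1 : ε ≤ 1 := by
        have : min 1 B ≤ 1 := min_le_left _ _
        linarith
      have hεB : ε < B := by
        have : min 1 B ≤ B := min_le_right _ _
        linarith
      have hεn : ε ^ n ≤ ε ^ 2 := pow_le_pow_of_le_one hε.le hε1 hn
      have hfε : ε ^ n - B * ε - A < 0 := by nlinarith
      have hεM : ε ≤ M := by linarith
      have := intermediate_value_Icc hεM hcont.continuousOn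
      have hmem : (0 : ℝ) ∈ Set.Icc (ε ^ n - B * ε - A) (M ^ n - B * M - A) :=
        ⟨hfε.le, by linarith⟩
      obtain ⟨c, hc, hfc⟩ := this hmem
      have hfc' : c ^ n - B * c - A = 0 := hfc
      exact ⟨c, lt_of_lt_of_le hε hc.1, by linarith⟩
  obtain ⟨x, hx, hxe⟩ := hex
  refine ⟨x, ⟨hx, by linarith⟩, ?_⟩
  rintro y ⟨hy, hye⟩
  exact uniq y x hy hx (by linarith) hxe
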